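/- arXiv:1510.06656 — 4 statements merged into one kernel-verified Lean document; each statement's English description precedes it below -/
import Mathlib

section
/- For the drifted Brownian motion model, the function g0 defined piecewise by g0(x) = −(c_b/(2μ))x² − (σ²c_b/(2μ²))x + (σ⁴(c_b+c_h)/(4μ³))(e^{2μx/σ²} − 1) for x < 0 and g0(x) = (c_h/(2μ))x² + (σ²c_h/(2μ²))x for x ≥ 0 is twice continuously differentiable on ℝ and satisfies (σ²/2)g0''(x) − μ g0'(x) = −c0(x), where c0(x) = −c_b x for x < 0 and c0(x) = c_h x for x ≥ 0. -/
open Real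

/-- Gluing lemma: a piecewise function whose pieces are differentiable and match
(in value and derivative) at the junction is differentiable everywhere. -/
lemma glue_hasDerivAt (f g f' g' F : ℝ → ℝ)
    (hf : ∀ x, HasDerivAt f (f' x) x) (hg : ∀ x, HasDerivAt g (g' x) x)
    (hF : ∀ x, F x = if x < 0 then f x else g x)
    (h0 : f 0 = g 0) (h0' : f' 0 = g' 0) (x : ℝ) :
    HasDerivAt F (if x < 0 then f' x else g' x) x := by
  rcases lt_trichotomy x 0 with hx | hx | hx
  · rw [if_pos hx]
    refine (hf x).congr_of_eventuallyEq ?_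
    filter_upwards [Iio_mem_nhds hx] with y hy
    rw [hF y, if_pos (Set.mem_Iio.mp hy)]
  · subst hx
    rw [if_neg (lt_irrefl 0)]
    have h1 : HasDerivWithinAt F (g' 0) (Set.Iic 0) 0 := by
      rw [← h0']
      refine (hf 0).hasDerivWithinAt.congr (fun y hy => ?_) ?_
      · rcases lt_or_eq_of_le (Set.mem_Iic.mp hy) with h | h
        · rw [hF y, if_pos h]
        · subst h; rw [hF 0, if_neg (lt_irrefl 0), h0]
      · rw [hF 0, if_neg (lt_irrefl 0), h0]
    have h2 : HasDerivWithinAt F (g' 0) (Set.Ici 0) 0 := by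
      refine (hg 0).hasDerivWithinAt.congr (fun y hy => ?_) ?_
      · rw [hF y, if_neg (not_lt.mpr (Set.mem_Ici.mp hy))]
      · rw [hF 0, if_neg (lt_irrefl 0)]
    have := h1.union h2
    rw [Set.Iic_union_Ici, hasDerivWithinAt_univ] at this
    exact this
  · rw [if_neg (not_lt.mpr hx.le)]
    refine (hg x).congr_of_eventuallyEq ?_
    filter_upwards [Ioi_mem_nhds hx] with y hy
    rw [hF y, if_neg (not_lt.mpr (le_of_lt (Set.mem_Ioi.mp hy)))]

/-- The function `g0` of the drifted Brownian motion model is `C²` and satisfies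
`(σ²/2)g0'' − μ g0' = −c0`. -/
theorem g0_dbm_C2_and_ODE (μ σ c_b c_h : ℝ)
    (hμ : 0 < μ) (hσ : 0 < σ) (hcb : 0 < c_b) (hch : 0 < c_h)
    (c0 g0 : ℝ → ℝ)
    (hc0_neg : ∀ x < (0 : ℝ), c0 x = -c_b * x)
    (hc0_pos : ∀ x ≥ (0 : ℝ), c0 x = c_h * x)
    (hg0_neg : ∀ x < (0 : ℝ), g0 x =
      -(c_b / (2 * μ)) * x ^ 2 - σ ^ 2 * c_b / (2 * μ ^ 2) * x +
        σ ^ 4 * (c_b + c_h) / (4 * μ ^ 3) * (Real.exp (2 * μ * x / σ ^ 2) - 1))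
    (hg0_pos : ∀ x ≥ (0 : ℝ), g0 x =
      c_h / (2 * μ) * x ^ 2 + σ ^ 2 * c_h / (2 * μ ^ 2) * x) :
    ContDiff ℝ 2 g0 ∧
    (∀ x, σ ^ 2 / 2 * deriv (deriv g0) x - μ * deriv g0 x = -c0 x) := by
  have hμ0 : μ ≠ 0 := ne_of_gt hμ
  have hσ0 : σ ≠ 0 := ne_of_gt hσ
  -- the pieces and their derivatives
  set f : ℝ → ℝ := fun y => -(c_b / (2 * μ)) * y ^ 2 - σ ^ 2 * c_b / (2 * μ ^ 2) * y +
      σ ^ 4 * (c_b + c_h) / (4 * μ ^ 3) * (Real.exp (2 * μ * y / σ ^ 2) - 1) with hfdef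
  set g : ℝ → ℝ := fun y => c_h / (2 * μ) * y ^ 2 + σ ^ 2 * c_h / (2 * μ ^ 2) * y with hgdef
  set f' : ℝ → ℝ := fun y => -(c_b / μ) * y - σ ^ 2 * c_b / (2 * μ ^ 2) +
      σ ^ 2 * (c_b + c_h) / (2 * μ ^ 2) * Real.exp (2 * μ * y / σ ^ 2) with hf'def
  set g' : ℝ → ℝ := fun y => c_h / μ * y + σ ^ 2 * c_h / (2 * μ ^ 2) with hg'def
  set f'' : ℝ → ℝ := fun y => -(c_b / μ) + (c_b + c_h) / μ * Real.exp (2 * μ * y / σ ^ 2)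
    with hf''def
  set g'' : ℝ → ℝ := fun y => c_h / μ with hg''def
  have hexp : ∀ x : ℝ, HasDerivAt (fun y => Real.exp (2 * μ * y / σ ^ 2))
      (Real.exp (2 * μ * x / σ ^ 2) * (2 * μ / σ ^ 2)) x := by
    intro x
    have hlin : HasDerivAt (fun y : ℝ => 2 * μ * y / σ ^ 2) (2 * μ / σ ^ 2) x := by
      simpa using ((hasDerivAt_id x).const_mul (2 * μ)).div_const (σ ^ 2)
    exact hlin.exp
  have hσ2 : (σ : ℝ) ^ 2 ≠ 0 := pow_ne_zero 2 hσ0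
  have hf : ∀ x, HasDerivAt f (f' x) x := by
    intro x
    have h := (((hasDerivAt_pow 2 x).const_mul (-(c_b / (2 * μ)))).sub
        ((hasDerivAt_id x).const_mul (σ ^ 2 * c_b / (2 * μ ^ 2)))).add
        (((hexp x).sub_const 1).const_mul (σ ^ 4 * (c_b + c_h) / (4 * μ ^ 3)))
    convert h using 1
    · rfl
    · rfl
    · rfl
    simp only [hfdef, hgdef, hf'def, hg'def, hf''def, hg''def, id]
    field_simp
    ring
  have hg : ∀ x, HasDerivAt g (g' x) x := by
    intro x
    have h := (((hasDerivAt_pow 2 x).const_mul (c_h / (2 * μ))).add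
        ((hasDerivAt_id x).const_mul (σ ^ 2 * c_h / (2 * μ ^ 2))))
    convert h using 1
    · rfl
    · rfl
    · rfl
    simp only [hfdef, hgdef, hf'def, hg'def, hf''def, hg''def, id]
    field_simp
    ring
  have hf' : ∀ x, HasDerivAt f' (f'' x) x := by
    intro x
    have h := ((((hasDerivAt_id x).const_mul (-(c_b / μ))).sub_const
        (σ ^ 2 * c_b / (2 * μ ^ 2))).add
        ((hexp x).const_mul (σ ^ 2 * (c_b + c_h) / (2 * μ ^ 2))))
    convert h using 1
    · rfl
    · rfl
    · rfl
    simp only [hfdef, hgdef, hf'def, hg'def, hf''def, hg''def, id]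
    field_simp
  have hg' : ∀ x, HasDerivAt g' (g'' x) x := by
    intro x
    have h := (((hasDerivAt_id x).const_mul (c_h / μ)).add_const (σ ^ 2 * c_h / (2 * μ ^ 2)))
    convert h using 1
    · rfl
    · rfl
    · rfl
    simp [hg''def]
  -- matching at 0
  have h0 : f 0 = g 0 := by simp [hfdef, hgdef]
  have h0' : f' 0 = g' 0 := by
    simp only [hf'def, hg'def, mul_zero, zero_div, Real.exp_zero, mul_one, zero_mul, zero_add]
    field_simp
    ring
  have h0'' : f'' 0 = g'' 0 := by
    simp only [hf''def, hg''def, mul_zero, zero_div, Real.exp_zero, mul_one]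
    field_simp
    ring
  -- first derivative of g0
  have hg0F : ∀ x, g0 x = if x < 0 then f x else g x := by
    intro x
    by_cases hx : x < 0
    · rw [hg0_neg x hx, if_pos hx]
    · rw [hg0_pos x (not_lt.mp hx), if_neg hx]
  have hD1 : ∀ x, HasDerivAt g0 (if x < 0 then f' x else g' x) x :=
    glue_hasDerivAt f g f' g' g0 hf hg hg0F h0 h0'
  have hderiv1 : deriv g0 = fun x => if x < 0 then f' x else g' x :=
    funext fun x => (hD1 x).deriv
  -- second derivative
  have hD2 : ∀ x, HasDerivAt (fun x => if x < 0 then f' x else g' x)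
      (if x < 0 then f'' x else g'' x) x :=
    glue_hasDerivAt f' g' f'' g'' _ hf' hg' (fun _ => rfl) h0' h0''
  have hderiv2 : (deriv fun x => if x < 0 then f' x else g' x) =
      fun x => if x < 0 then f'' x else g'' x :=
    funext fun x => (hD2 x).deriv
  -- continuity of the second derivative
  have hψcont : Continuous fun x => if x < 0 then f'' x else g'' x := by
    have heq : (fun x => if x < 0 then f'' x else g'' x) =
        fun x : ℝ => if x ≤ 0 then f'' x else g'' x := by
      funext x
      rcases lt_trichotomy x 0 with hx | hx | hx
      · rw [if_pos hx, if_pos hx.le]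
      · subst hx; rw [if_neg (lt_irrefl 0), if_pos le_rfl, h0'']
      · rw [if_neg (not_lt.mpr hx.le), if_neg (not_le.mpr hx)]
    rw [heq]
    have hcf : Continuous f'' := by
      rw [hf''def]
      fun_prop
    have hcg : Continuous g'' := continuous_const
    exact Continuous.if_le hcf hcg continuous_id continuous_const
      (fun x hx => by rw [hx, h0''])
  constructor
  · rw [show ((2 : WithTop ℕ∞)) = (1 : WithTop ℕ∞) + 1 from rfl, contDiff_succ_iff_deriv]
    refine ⟨fun x => (hD1 x).differentiableAt, by simp, ?_⟩
    rw [hderiv1, contDiff_one_iff_deriv]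
    exact ⟨fun x => (hD2 x).differentiableAt, by rw [hderiv2]; exact hψcont⟩
  · intro x
    rw [hderiv1, hderiv2]
    by_cases hx : x < 0
    · simp only [if_pos hx, hc0_neg x hx, hf'def, hf''def]
      field_simp [hμ0, hσ0]
      ring
    · simp only [if_neg hx, hc0_pos x (not_lt.mp hx), hg'def, hg''def]
      field_simp [hμ0, hσ0]
      ring
end

section
/- The function g0'(x), equal to −(c_b/μ)x − σ²c_b/(2μ²) + (σ²(c_b+c_h)/(2μ²))e^{2μx/σ²} for x < 0 and (c_h/μ)x + σ²c_h/(2μ²) for x ≥ 0, is strictly decreasing on (−∞, x̄) and strictly increasing on (x̄, ∞), where x̄ = (σ²/(2μ)) ln(c_b/(c_b+c_h)) < 0, and g0'(x̄) = −(c_b σ²/(2μ²)) ln(c_b/(c_b+c_h)) > 0. -/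
open Real Set

/-- `g0'` is strictly decreasing on `(−∞, x̄)`, strictly increasing on `(x̄, ∞)`,
where `x̄ = (σ²/(2μ)) ln(c_b/(c_b+c_h)) < 0`, and `g0'(x̄) > 0`. -/
theorem g0_deriv_dbm_monotonicity (μ σ c_b c_h : ℝ)
    (hμ : 0 < μ) (hσ : 0 < σ) (hcb : 0 < c_b) (hch : 0 < c_h)
    (g1 : ℝ → ℝ)
    (hg1_neg : ∀ x < (0 : ℝ), g1 x =
      -(c_b / μ) * x - σ ^ 2 * c_b / (2 * μ ^ 2) +
        σ ^ 2 * (c_b + c_h) / (2 * μ ^ 2) * Real.exp (2 * μ * x / σ ^ 2))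
    (hg1_pos : ∀ x ≥ (0 : ℝ), g1 x = c_h / μ * x + σ ^ 2 * c_h / (2 * μ ^ 2))
    (xbar : ℝ) (hxbar : xbar = σ ^ 2 / (2 * μ) * Real.log (c_b / (c_b + c_h))) :
    xbar < 0 ∧
    StrictAntiOn g1 (Iio xbar) ∧
    StrictMonoOn g1 (Ioi xbar) ∧
    g1 xbar = -(c_b * σ ^ 2 / (2 * μ ^ 2)) * Real.log (c_b / (c_b + c_h)) ∧
    0 < g1 xbar := by
  set L := Real.log (c_b / (c_b + c_h)) with hLdef
  have hμ2 : (0:ℝ) < μ ^ 2 := by positivity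
  have hσ2 : (0:ℝ) < σ ^ 2 := by positivity
  have hsum : 0 < c_b + c_h := by linarith
  have hr : (0:ℝ) < c_b / (c_b + c_h) := by positivity
  have hr1 : c_b / (c_b + c_h) < 1 := by
    rw [div_lt_one hsum]; linarith
  have hL : L < 0 := Real.log_neg hr hr1
  have hxneg : xbar < 0 := by
    rw [hxbar]
    have : 0 < σ ^ 2 / (2 * μ) := by positivity
    exact mul_neg_of_pos_of_neg this hL
  set f : ℝ → ℝ := fun x =>
    -(c_b / μ) * x - σ ^ 2 * c_b / (2 * μ ^ 2) +
      σ ^ 2 * (c_b + c_h) / (2 * μ ^ 2) * Real.exp (2 * μ * x / σ ^ 2) with hfdef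
  have hd : ∀ x : ℝ, HasDerivAt f
      (-(c_b / μ) + (c_b + c_h) / μ * Real.exp (2 * μ * x / σ ^ 2)) x := by
    intro x
    have h1 : HasDerivAt (fun x : ℝ => 2 * μ * x / σ ^ 2) (2 * μ / σ ^ 2) x := by
      simpa using ((hasDerivAt_id x).const_mul (2 * μ)).div_const (σ ^ 2)
    have h2 := (h1.exp).const_mul (σ ^ 2 * (c_b + c_h) / (2 * μ ^ 2))
    have h3 : HasDerivAt (fun x : ℝ => -(c_b / μ) * x - σ ^ 2 * c_b / (2 * μ ^ 2))
        (-(c_b / μ)) x := by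
      simpa using ((hasDerivAt_id x).const_mul (-(c_b / μ))).sub_const
        (σ ^ 2 * c_b / (2 * μ ^ 2))
    have := h3.add h2
    refine this.congr_deriv ?_
    field_simp
  have hcont : Continuous f := by
    apply Continuous.add
    · exact (continuous_const.mul continuous_id).sub continuous_const
    · exact continuous_const.mul (((continuous_const.mul continuous_id).div_const _).rexp)
  have hexp_lt : ∀ x < xbar, Real.exp (2 * μ * x / σ ^ 2) < c_b / (c_b + c_h) := by
    intro x hx
    rw [← Real.exp_log hr, Real.exp_lt_exp, ← hLdef]
    rw [div_lt_iff₀ hσ2]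
    have h := mul_lt_mul_of_pos_left hx (by positivity : (0:ℝ) < 2 * μ)
    rw [hxbar] at h
    calc 2 * μ * x < 2 * μ * (σ ^ 2 / (2 * μ) * L) := h
      _ = L * σ ^ 2 := by field_simp
  have hexp_gt : ∀ x, xbar < x → c_b / (c_b + c_h) < Real.exp (2 * μ * x / σ ^ 2) := by
    intro x hx
    rw [← Real.exp_log hr, Real.exp_lt_exp, ← hLdef]
    rw [lt_div_iff₀ hσ2]
    have h := mul_lt_mul_of_pos_left hx (by positivity : (0:ℝ) < 2 * μ)
    rw [hxbar] at h
    calc L * σ ^ 2 = 2 * μ * (σ ^ 2 / (2 * μ) * L) := by field_simp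
      _ < 2 * μ * x := h
  have hanti : StrictAntiOn f (Iio xbar) := by
    apply strictAntiOn_of_deriv_neg (convex_Iio xbar) hcont.continuousOn
    intro x hx
    rw [interior_Iio] at hx
    rw [(hd x).deriv]
    have h := hexp_lt x hx
    have h2 : (c_b + c_h) * Real.exp (2 * μ * x / σ ^ 2) < c_b := by
      have := (lt_div_iff₀ hsum).mp h; nlinarith [this]
    rw [div_mul_eq_mul_div, add_comm, ← sub_eq_add_neg, sub_neg, div_lt_div_iff₀ hμ hμ]
    nlinarith [h2]
  have hmono : StrictMonoOn f (Ici xbar) := by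
    apply strictMonoOn_of_deriv_pos (convex_Ici xbar) hcont.continuousOn
    intro x hx
    rw [interior_Ici] at hx
    rw [(hd x).deriv]
    have h := hexp_gt x hx
    have h2 : c_b < (c_b + c_h) * Real.exp (2 * μ * x / σ ^ 2) := by
      have := (div_lt_iff₀ hsum).mp h; nlinarith [this]
    rw [div_mul_eq_mul_div, add_comm, ← sub_eq_add_neg, sub_pos, div_lt_div_iff₀ hμ hμ]
    nlinarith [h2]
  have heq : ∀ x ≤ (0:ℝ), g1 x = f x := by
    intro x hx
    rcases hx.lt_or_eq with h | h
    · exact hg1_neg x h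
    · subst h
      rw [hg1_pos 0 le_rfl, hfdef]
      simp only [mul_zero, zero_div, Real.exp_zero, mul_one, neg_mul]
      field_simp
      ring
  have hanti' : StrictAntiOn g1 (Iio xbar) := by
    intro x hx y hy hxy
    rw [heq x (le_of_lt (lt_trans hx hxneg)), heq y (le_of_lt (lt_trans hy hxneg))]
    exact hanti hx hy hxy
  have hmono' : StrictMonoOn g1 (Ioi xbar) := by
    intro x hx y hy hxy
    rcases le_or_gt y 0 with hy0 | hy0
    · rw [heq x (le_trans hxy.le hy0), heq y hy0]
      exact hmono (Set.mem_Ici.mpr (le_of_lt hx)) (Set.mem_Ici.mpr (le_of_lt hy)) hxy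
    · rcases le_or_gt x 0 with hx0 | hx0
      · rw [heq x hx0, hg1_pos y hy0.le]
        have h1 : f x ≤ f 0 := by
          rcases hx0.lt_or_eq with h | h
          · exact (hmono (Set.mem_Ici.mpr (le_of_lt hx)) (Set.mem_Ici.mpr hxneg.le) h).le
          · rw [h]
        have h2 : f 0 = σ ^ 2 * c_h / (2 * μ ^ 2) := by
          rw [← heq 0 le_rfl, hg1_pos 0 le_rfl]; ring
        have h3 : 0 < c_h / μ * y := mul_pos (div_pos hch hμ) hy0
        rw [h2] at h1
        linarith
      · rw [hg1_pos x hx0.le, hg1_pos y hy0.le]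
        have h3 : 0 < c_h / μ * (y - x) := mul_pos (div_pos hch hμ) (sub_pos.mpr hxy)
        nlinarith [h3]
  have hval : g1 xbar = -(c_b * σ ^ 2 / (2 * μ ^ 2)) * L := by
    rw [hg1_neg xbar hxneg, hxbar]
    have harg : 2 * μ * (σ ^ 2 / (2 * μ) * L) / σ ^ 2 = L := by
      field_simp
    rw [harg, hLdef, Real.exp_log hr]
    field_simp
    ring
  refine ⟨hxneg, hanti', hmono', hval, ?_⟩
  rw [hval]
  have : 0 < c_b * σ ^ 2 / (2 * μ ^ 2) := by positivity
  nlinarith [mul_pos this (neg_pos.mpr hL)]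
end

section
/- For a drifted Brownian motion with reflection at 0, cost rates c_h > 0 (holding), k1 > 0 (fixed order cost), k2 (proportional order cost), the function F(y,z) = (k1 + k2(z−y) + (c_h/(2μ))(z²−y²) + (σ²c_h/(2μ²))(z−y)) / ((z−y)/μ) over 0 ≤ y < z attains its minimum at (y*, z*) = (0, √(2k1μ/c_h)), with minimum value F* = √(2k1μc_h) + k2μ + σ²c_h/(2μ). -/
open Real

/-- For the reflected drifted Brownian motion model, `F` attains its minimum
over `0 ≤ y < z` at `(0, √(2k1μ/c_h))` with value `√(2k1μc_h) + k2μ + σ²c_h/(2μ)`. -/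
theorem F_min_reflected_dbm (μ σ c_h k1 k2 : ℝ)
    (hμ : 0 < μ) (hσ : 0 < σ) (hch : 0 < c_h) (hk1 : 0 < k1) (hk2 : 0 ≤ k2)
    (F : ℝ → ℝ → ℝ)
    (hF : ∀ y z, 0 ≤ y → y < z →
      F y z = (k1 + k2 * (z - y) + c_h / (2 * μ) * (z ^ 2 - y ^ 2) +
        σ ^ 2 * c_h / (2 * μ ^ 2) * (z - y)) / ((z - y) / μ))
    (ystar zstar Fstar : ℝ)
    (hy : ystar = 0) (hz : zstar = Real.sqrt (2 * k1 * μ / c_h))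
    (hFs : Fstar = Real.sqrt (2 * k1 * μ * c_h) + k2 * μ + σ ^ 2 * c_h / (2 * μ)) :
    F ystar zstar = Fstar ∧
    (∀ y z, 0 ≤ y → y < z → Fstar ≤ F y z) := by
  -- simplified form of F
  have hF' : ∀ y z, 0 ≤ y → y < z →
      F y z = μ * k1 / (z - y) + k2 * μ + c_h * (z + y) / 2 + σ ^ 2 * c_h / (2 * μ) := by
    intro y z hy0 hyz
    rw [hF y z hy0 hyz]
    have ht : z - y ≠ 0 := by linarith
    field_simp
    ring
  have hzpos : 0 < zstar := by
    rw [hz]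
    apply Real.sqrt_pos.mpr
    positivity
  have hzsq : zstar ^ 2 = 2 * k1 * μ / c_h := by
    rw [hz, sq]
    exact Real.mul_self_sqrt (by positivity)
  have hcz : c_h * zstar = Real.sqrt (2 * k1 * μ * c_h) := by
    have : (2 : ℝ) * k1 * μ * c_h = (c_h * zstar) ^ 2 := by
      rw [mul_pow, hzsq]; field_simp
    rw [this, Real.sqrt_sq (by positivity)]
  constructor
  · rw [hy, hF' 0 zstar le_rfl (by simpa [hy] using hzpos), hFs]
    have h2 : c_h * zstar ^ 2 = 2 * k1 * μ := by
      rw [hzsq]; field_simp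
    have h1 : μ * k1 / zstar = c_h * zstar / 2 := by
      rw [div_eq_div_iff (ne_of_gt hzpos) (by norm_num : (2:ℝ) ≠ 0)]
      linear_combination -1 * h2
    simp only [sub_zero, add_zero]
    rw [h1, ← hcz]
    ring
  · intro y z hy0 hyz
    rw [hF' y z hy0 hyz, hFs]
    have ht : 0 < z - y := by linarith
    have key : Real.sqrt (2 * k1 * μ * c_h) ≤ μ * k1 / (z - y) + c_h * (z - y) / 2 := by
      have hab : 0 ≤ μ * k1 / (z - y) + c_h * (z - y) / 2 := by positivity
      have hprod : (μ * k1 / (z - y)) * (c_h * (z - y) / 2) = μ * k1 * c_h / 2 := by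
        field_simp
      calc Real.sqrt (2 * k1 * μ * c_h)
          ≤ Real.sqrt ((μ * k1 / (z - y) + c_h * (z - y) / 2) ^ 2) := by
            apply Real.sqrt_le_sqrt
            nlinarith [sq_nonneg (μ * k1 / (z - y) - c_h * (z - y) / 2)]
        _ = μ * k1 / (z - y) + c_h * (z - y) / 2 := Real.sqrt_sq hab
    nlinarith [key, mul_nonneg hch.le hy0]
end

section
/- In the GBM model with k3 = 0: define F(y,z) = (k1 + k2(z^η − y^η) − (k4/ρ̃(β))(z^β − y^β)) / ((2/(2μ+σ²))(ln z − ln y)) for 0 < y < z. Then F(y,z) → ∞ in each of the limits: (z−y) → 0 with y,z → x̄ ∈ (0,∞); z → ∞ with y fixed; (y,z) → (∞,∞); y → 0 with z fixed; (y,z) → (0,∞); and (y,z) → (0,0). Consequently F attains its minimum at some (y*, z*) with 0 < y* < z* < ∞. -/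
open Real Set Filter Topology

private lemma gbm_rpow_div_log {r : ℝ} (hr : 0 < r) :
    Tendsto (fun x : ℝ => x ^ r / Real.log x) atTop atTop := by
  have h : Tendsto (fun x : ℝ => Real.log x / x ^ r) atTop (𝓝 0) :=
    (isLittleO_log_rpow_atTop hr).tendsto_div_nhds_zero
  have hpos : ∀ᶠ x : ℝ in atTop, Real.log x / x ^ r ∈ Ioi (0 : ℝ) := by
    filter_upwards [eventually_gt_atTop 1] with x hx
    exact div_pos (Real.log_pos hx) (Real.rpow_pos_of_pos (zero_lt_one.trans hx) r)
  have h2 := (tendsto_nhdsWithin_iff.2 ⟨h, hpos⟩).inv_tendsto_nhdsGT_zero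
  refine h2.congr' ?_
  filter_upwards [eventually_gt_atTop 1] with x _
  simp [Pi.inv_apply, inv_div]

private lemma gbm_rpow_neg_zero {b : ℝ} (hb : b < 0) :
    Tendsto (fun x : ℝ => x ^ b) (𝓝[>] (0:ℝ)) atTop := by
  have h := (tendsto_rpow_atTop (neg_pos.2 hb)).comp tendsto_inv_nhdsGT_zero
  refine h.congr' ?_
  filter_upwards [self_mem_nhdsWithin] with x hx
  have hx0 : (0:ℝ) < x := hx
  simp only [Function.comp_apply]
  rw [Real.inv_rpow hx0.le, ← Real.rpow_neg hx0.le, neg_neg]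

private lemma gbm_rpow_div_neg_log {b : ℝ} (hb : b < 0) :
    Tendsto (fun x : ℝ => x ^ b / (-Real.log x)) (𝓝[>] (0:ℝ)) atTop := by
  have h : Tendsto (fun x : ℝ => Real.log x / x ^ b) (𝓝[>] (0:ℝ)) (𝓝 0) :=
    tendsto_log_div_rpow_nhdsGT_zero hb
  have h' : Tendsto (fun x : ℝ => -Real.log x / x ^ b) (𝓝[>] (0:ℝ)) (𝓝 0) := by
    simpa [neg_div] using h.neg
  have hpos : ∀ᶠ x in 𝓝[>] (0:ℝ), -Real.log x / x ^ b ∈ Ioi (0:ℝ) := by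
    filter_upwards [Ioo_mem_nhdsGT_of_mem (Set.left_mem_Ico.2 one_pos)] with x hx
    exact div_pos (neg_pos.2 (Real.log_neg hx.1 hx.2)) (Real.rpow_pos_of_pos hx.1 b)
  have h2 := (tendsto_nhdsWithin_iff.2 ⟨h', hpos⟩).inv_tendsto_nhdsGT_zero
  refine h2.congr' ?_
  filter_upwards [self_mem_nhdsWithin] with x _
  simp [Pi.inv_apply, inv_div]

private lemma gbm_quot_atTop {a c' r : ℝ} (C C' : ℝ) (ha : 0 < a) (hc' : 0 < c') (hr : 0 < r) :
    Tendsto (fun z : ℝ => (a * z ^ r + C) / (c' * Real.log z + C')) atTop atTop := by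
  have hmain : Tendsto (fun z : ℝ => a / (4 * c') * (z ^ r / Real.log z)) atTop atTop :=
    (gbm_rpow_div_log hr).const_mul_atTop (by positivity)
  refine tendsto_atTop_mono' _ ?_ hmain
  have h1 : ∀ᶠ z : ℝ in atTop, -C ≤ a / 2 * z ^ r :=
    ((tendsto_rpow_atTop hr).const_mul_atTop (half_pos ha)).eventually_ge_atTop (-C)
  have h2 : ∀ᶠ z : ℝ in atTop, |C'| + 1 ≤ c' * Real.log z :=
    (tendsto_log_atTop.const_mul_atTop hc').eventually_ge_atTop (|C'| + 1)
  filter_upwards [h1, h2, eventually_gt_atTop 1] with z h1 h2 hz1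
  have hlog : 0 < Real.log z := Real.log_pos hz1
  have hzr : 0 < z ^ r := Real.rpow_pos_of_pos (zero_lt_one.trans hz1) r
  have hd1 : 0 < c' * Real.log z + C' := by
    have := neg_abs_le C'; linarith
  have hd2 : c' * Real.log z + C' ≤ 2 * (c' * Real.log z) := by
    have := le_abs_self C'; linarith
  have hn : a / 2 * z ^ r ≤ a * z ^ r + C := by nlinarith
  have he : a / (4 * c') * (z ^ r / Real.log z) = (a / 2 * z ^ r) / (2 * (c' * Real.log z)) := by
    field_simp; ring
  rw [he]
  exact div_le_div₀ (by nlinarith) hn hd1 hd2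

private lemma gbm_quot_zero {a c' b : ℝ} (C C' : ℝ) (ha : 0 < a) (hc' : 0 < c') (hb : b < 0) :
    Tendsto (fun y : ℝ => (a * y ^ b + C) / (c' * (-Real.log y) + C')) (𝓝[>] (0:ℝ)) atTop := by
  have hmain : Tendsto (fun y : ℝ => a / (4 * c') * (y ^ b / (-Real.log y))) (𝓝[>] (0:ℝ)) atTop :=
    (gbm_rpow_div_neg_log hb).const_mul_atTop (by positivity)
  refine tendsto_atTop_mono' _ ?_ hmain
  have h1 : ∀ᶠ y : ℝ in 𝓝[>] (0:ℝ), -C ≤ a / 2 * y ^ b :=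
    ((gbm_rpow_neg_zero hb).const_mul_atTop (half_pos ha)).eventually_ge_atTop (-C)
  have hmlog : Tendsto (fun y : ℝ => -Real.log y) (𝓝[>] (0:ℝ)) atTop :=
    tendsto_neg_atBot_atTop.comp tendsto_log_nhdsGT_zero
  have h2 : ∀ᶠ y : ℝ in 𝓝[>] (0:ℝ), |C'| + 1 ≤ c' * (-Real.log y) :=
    (hmlog.const_mul_atTop hc').eventually_ge_atTop (|C'| + 1)
  filter_upwards [h1, h2, Ioo_mem_nhdsGT_of_mem (Set.left_mem_Ico.2 one_pos)] with y h1 h2 hy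
  have hlog : 0 < -Real.log y := neg_pos.2 (Real.log_neg hy.1 hy.2)
  have hyb : 0 < y ^ b := Real.rpow_pos_of_pos hy.1 b
  have hd1 : 0 < c' * (-Real.log y) + C' := by
    have := neg_abs_le C'; linarith
  have hd2 : c' * (-Real.log y) + C' ≤ 2 * (c' * (-Real.log y)) := by
    have := le_abs_self C'; linarith
  have hn : a / 2 * y ^ b ≤ a * y ^ b + C := by nlinarith
  have he : a / (4 * c') * (y ^ b / (-Real.log y)) = (a / 2 * y ^ b) / (2 * (c' * (-Real.log y))) := by
    field_simp; ring
  rw [he]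
  exact div_le_div₀ (by nlinarith) hn hd1 hd2

private lemma gbm_mediant {a b s t : ℝ} (hs : 0 < s) (ht : 0 < t) :
    min (a / s) (b / t) ≤ (a + b) / (s + t) := by
  rw [le_div_iff₀ (by linarith)]
  have h1 : min (a / s) (b / t) * s ≤ a := by
    rw [← le_div_iff₀ hs]; exact min_le_left _ _
  have h2 : min (a / s) (b / t) * t ≤ b := by
    rw [← le_div_iff₀ ht]; exact min_le_right _ _
  nlinarith

private lemma gbm_rpow_exp (x s t : ℝ) (hx : 0 < x) :
    x ^ t * (t * s) ≤ (x * Real.exp s) ^ t - x ^ t := by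
  have h1 : (x * Real.exp s) ^ t = x ^ t * Real.exp (t * s) := by
    rw [Real.mul_rpow hx.le (Real.exp_pos s).le, Real.rpow_def_of_pos (Real.exp_pos s),
      Real.log_exp, mul_comm s t]
  rw [h1]
  nlinarith [Real.add_one_le_exp (t * s), Real.rpow_pos_of_pos hx t]

private lemma gbm_psi_atBot {c1 c2 c3 r b : ℝ} (hc1 : 0 < c1) (hc2 : 0 < c2) (hc3 : 0 < c3)
    (hr : 0 < r) (hb : b < 0) :
    Tendsto (fun x : ℝ => c1 * Real.log x - c2 * x ^ r + c3 * x ^ b) atTop atBot := by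
  have hcmp : Tendsto (fun x : ℝ => -(c2 / 2) * x ^ r + c3) atTop atBot := by
    have h := tendsto_atBot_add_const_right atTop c3
      (tendsto_neg_atTop_atBot.comp ((tendsto_rpow_atTop hr).const_mul_atTop (half_pos hc2)))
    refine h.congr fun x => ?_
    simp [Function.comp, neg_mul]
  refine tendsto_atBot_mono' _ ?_ hcmp
  have h1 : ∀ᶠ x : ℝ in atTop, ‖Real.log x‖ ≤ c2 / (2 * c1) * ‖x ^ r‖ :=
    (isLittleO_log_rpow_atTop hr).def (by positivity)
  filter_upwards [h1, eventually_ge_atTop 1] with x h1 hx1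
  have hx0 : (0:ℝ) < x := lt_of_lt_of_le one_pos hx1
  have hlog : 0 ≤ Real.log x := Real.log_nonneg hx1
  have hxr : 0 < x ^ r := Real.rpow_pos_of_pos hx0 r
  have hxb : x ^ b ≤ 1 := Real.rpow_le_one_of_one_le_of_nonpos hx1 hb.le
  rw [Real.norm_eq_abs, Real.norm_eq_abs, abs_of_nonneg hlog, abs_of_nonneg hxr.le] at h1
  have : c1 * Real.log x ≤ c2 / 2 * x ^ r := by
    have := mul_le_mul_of_nonneg_left h1 hc1.le
    calc c1 * Real.log x ≤ c1 * (c2 / (2 * c1) * x ^ r) := this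
      _ = c2 / 2 * x ^ r := by field_simp
  nlinarith

private lemma gbm_psi_atTop {c1 c2 c3 r b : ℝ} (hc1 : 0 < c1) (hc2 : 0 < c2) (hc3 : 0 < c3)
    (hr : 0 < r) (hb : b < 0) :
    Tendsto (fun x : ℝ => c1 * Real.log x - c2 * x ^ r + c3 * x ^ b) (𝓝[>] (0:ℝ)) atTop := by
  have hcmp : Tendsto (fun x : ℝ => c3 / 2 * x ^ b + -c2) (𝓝[>] (0:ℝ)) atTop := by
    have := (gbm_rpow_neg_zero hb).const_mul_atTop (half_pos hc3)
    exact this.atTop_add tendsto_const_nhds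
  refine tendsto_atTop_mono' _ ?_ hcmp
  have h1 : ∀ᶠ x in 𝓝[>] (0:ℝ), ‖Real.log x‖ ≤ c3 / (2 * c1) * ‖x ^ b‖ :=
    (isLittleO_log_rpow_nhdsGT_zero hb).def (by positivity)
  filter_upwards [h1, Ioo_mem_nhdsGT_of_mem (Set.left_mem_Ico.2 one_pos)] with x h1 hx
  have hlog : Real.log x ≤ 0 := (Real.log_neg hx.1 hx.2).le
  have hxb : 0 < x ^ b := Real.rpow_pos_of_pos hx.1 b
  have hxr : x ^ r ≤ 1 := Real.rpow_le_one hx.1.le hx.2.le hr.le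
  rw [Real.norm_eq_abs, Real.norm_eq_abs, abs_of_nonpos hlog, abs_of_nonneg hxb.le] at h1
  have : -(c3 / (2 * c1) * x ^ b) ≤ Real.log x := by linarith
  have h3 : -(c3 / 2 * x ^ b) ≤ c1 * Real.log x := by
    have := mul_le_mul_of_nonneg_left this hc1.le
    calc -(c3 / 2 * x ^ b) = c1 * -(c3 / (2 * c1) * x ^ b) := by field_simp
      _ ≤ c1 * Real.log x := this
  nlinarith
set_option maxHeartbeats 1000000 in
/-- In the GBM model with `k3 = 0`, `F(y,z)` blows up at every part of the
boundary of `{0 < y < z}` and hence attains its minimum at an interior pair. -/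
theorem gbm_F_boundary_blowup_and_min (μ σ k1 k2 k4 β η : ℝ)
    (hμ : 0 < μ) (hσ : 0 < σ) (hk1 : 0 < k1) (hk2 : 0 < k2) (hk4 : 0 < k4)
    (hβ : β < 0) (hη0 : 0 < η) (hη1 : η ≤ 1)
    (ρ : ℝ) (hρ : ρ = σ ^ 2 / 2 * β ^ 2 - (μ + σ ^ 2 / 2) * β) (hρpos : 0 < ρ)
    (F : ℝ → ℝ → ℝ)
    (hF : ∀ y z : ℝ, 0 < y → y < z →
      F y z = (k1 + k2 * (z ^ η - y ^ η) - k4 / ρ * (z ^ β - y ^ β)) /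
        (2 / (2 * μ + σ ^ 2) * (Real.log z - Real.log y)))
    (D : Set (ℝ × ℝ)) (hD : D = {p : ℝ × ℝ | 0 < p.1 ∧ p.1 < p.2}) :
    (∀ xbar > (0 : ℝ),
      Tendsto (fun p : ℝ × ℝ => F p.1 p.2) (nhds (xbar, xbar) ⊓ 𝓟 D) atTop) ∧
    (∀ y > (0 : ℝ), Tendsto (fun z => F y z) atTop atTop) ∧
    Tendsto (fun p : ℝ × ℝ => F p.1 p.2) ((atTop ×ˢ atTop) ⊓ 𝓟 D) atTop ∧
    (∀ z > (0 : ℝ), Tendsto (fun y => F y z) (nhdsWithin 0 (Ioi 0)) atTop) ∧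
    Tendsto (fun p : ℝ × ℝ => F p.1 p.2)
      ((nhdsWithin 0 (Ioi 0) ×ˢ atTop) ⊓ 𝓟 D) atTop ∧
    Tendsto (fun p : ℝ × ℝ => F p.1 p.2) (nhds ((0 : ℝ), (0 : ℝ)) ⊓ 𝓟 D) atTop ∧
    ∃ ystar zstar : ℝ, 0 < ystar ∧ ystar < zstar ∧
      ∀ y z : ℝ, 0 < y → y < z → F ystar zstar ≤ F y z := by
  have hσ2 : 0 < 2 * μ + σ ^ 2 := by positivity
  obtain ⟨c, hc_def⟩ : ∃ x : ℝ, x = 2 / (2 * μ + σ ^ 2) := ⟨_, rfl⟩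
  have hc : 0 < c := by rw [hc_def]; positivity
  have hc0 : c ≠ 0 := ne_of_gt hc
  have hF' : ∀ y z : ℝ, 0 < y → y < z →
      F y z = (k1 + k2 * (z ^ η - y ^ η) - k4 / ρ * (z ^ β - y ^ β)) /
        (c * (Real.log z - Real.log y)) := by
    intro y z hy hyz; rw [hc_def]; exact hF y z hy hyz
  have hk4' : 0 < k4 / ρ := div_pos hk4 hρpos
  have hnb : 0 < -β := neg_pos.2 hβ
  -- basic pointwise facts on D
  have hu : ∀ {y z : ℝ}, 0 < y → y < z → 0 < Real.log z - Real.log y :=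
    fun hy hyz => sub_pos.2 (Real.log_lt_log hy hyz)
  have hηbd : ∀ {y z : ℝ}, 0 < y → y < z →
      η * y ^ η * (Real.log z - Real.log y) ≤ z ^ η - y ^ η := by
    intro y z hy hyz
    have hz : 0 < z := hy.trans hyz
    have hzy : z = y * Real.exp (Real.log z - Real.log y) := by
      rw [Real.exp_sub, Real.exp_log hz, Real.exp_log hy]; field_simp
    calc η * y ^ η * (Real.log z - Real.log y)
        = y ^ η * (η * (Real.log z - Real.log y)) := by ring
      _ ≤ (y * Real.exp (Real.log z - Real.log y)) ^ η - y ^ η := gbm_rpow_exp y _ η hy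
      _ = z ^ η - y ^ η := by rw [← hzy]
  have hβbd : ∀ {y z : ℝ}, 0 < y → y < z →
      (-β) * z ^ β * (Real.log z - Real.log y) ≤ y ^ β - z ^ β := by
    intro y z hy hyz
    have hz : 0 < z := hy.trans hyz
    have hzy : y = z * Real.exp (-(Real.log z - Real.log y)) := by
      rw [Real.exp_neg, Real.exp_sub, Real.exp_log hz, Real.exp_log hy]
      field_simp
    calc (-β) * z ^ β * (Real.log z - Real.log y)
        = z ^ β * (β * (-(Real.log z - Real.log y))) := by ring
      _ ≤ (z * Real.exp (-(Real.log z - Real.log y))) ^ β - z ^ β := gbm_rpow_exp z _ β hz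
      _ = y ^ β - z ^ β := by rw [← hzy]
  -- lower bounds for F
  have lbA : ∀ y z : ℝ, 0 < y → y < z →
      k1 / (c * (Real.log z - Real.log y)) ≤ F y z := by
    intro y z hy hyz
    rw [hF' y z hy hyz]
    have h1 := hηbd hy hyz
    have h2 := hβbd hy hyz
    have hu' := hu hy hyz
    have hyη : 0 < y ^ η := Real.rpow_pos_of_pos hy η
    have hzβ : 0 < z ^ β := Real.rpow_pos_of_pos (hy.trans hyz) β
    have hX : 0 < c * (Real.log z - Real.log y) := by positivity
    have hN : k1 ≤ k1 + k2 * (z ^ η - y ^ η) - k4 / ρ * (z ^ β - y ^ β) := by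
      linarith [mul_le_mul_of_nonneg_left h1 hk2.le, mul_le_mul_of_nonneg_left h2 hk4'.le,
        mul_nonneg hk4'.le (mul_nonneg (mul_nonneg hnb.le hzβ.le) hu'.le),
        mul_nonneg hk2.le (mul_nonneg (mul_nonneg hη0.le hyη.le) hu'.le)]
    rw [div_le_div_iff₀ hX hX]
    exact mul_le_mul_of_nonneg_right hN hX.le
  have lbB : ∀ y z : ℝ, 0 < y → y < z → k2 * η / c * y ^ η ≤ F y z := by
    intro y z hy hyz
    rw [hF' y z hy hyz]
    have h1 := hηbd hy hyz
    have h2 := hβbd hy hyz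
    have hu' := hu hy hyz
    have hyη : 0 < y ^ η := Real.rpow_pos_of_pos hy η
    have hzβ : 0 < z ^ β := Real.rpow_pos_of_pos (hy.trans hyz) β
    have hX : 0 < c * (Real.log z - Real.log y) := by positivity
    rw [le_div_iff₀ hX]
    have e1 : k2 * η / c * y ^ η * (c * (Real.log z - Real.log y))
        = k2 * (η * y ^ η * (Real.log z - Real.log y)) := by field_simp
    rw [e1]
    linarith [mul_le_mul_of_nonneg_left h1 hk2.le, mul_le_mul_of_nonneg_left h2 hk4'.le,
      mul_nonneg hk4'.le (mul_nonneg (mul_nonneg hnb.le hzβ.le) hu'.le)]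
  have lbC : ∀ y z : ℝ, 0 < y → y < z → k4 / ρ * (-β) / c * z ^ β ≤ F y z := by
    intro y z hy hyz
    rw [hF' y z hy hyz]
    have h1 := hηbd hy hyz
    have h2 := hβbd hy hyz
    have hu' := hu hy hyz
    have hyη : 0 < y ^ η := Real.rpow_pos_of_pos hy η
    have hzβ : 0 < z ^ β := Real.rpow_pos_of_pos (hy.trans hyz) β
    have hX : 0 < c * (Real.log z - Real.log y) := by positivity
    rw [le_div_iff₀ hX]
    have e1 : k4 / ρ * (-β) / c * z ^ β * (c * (Real.log z - Real.log y))
        = k4 / ρ * ((-β) * z ^ β * (Real.log z - Real.log y)) := by field_simp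
    rw [e1]
    linarith [mul_le_mul_of_nonneg_left h1 hk2.le, mul_le_mul_of_nonneg_left h2 hk4'.le,
      mul_nonneg hk2.le (mul_nonneg (mul_nonneg hη0.le hyη.le) hu'.le)]
  have lbD : ∀ y z : ℝ, 0 < y → y < z →
      (k2 * z ^ η + (k1 - k2 * y ^ η)) / (c * Real.log z + -(c * Real.log y)) ≤ F y z := by
    intro y z hy hyz
    rw [hF' y z hy hyz]
    have h2 := hβbd hy hyz
    have hu' := hu hy hyz
    have hzβ : 0 < z ^ β := Real.rpow_pos_of_pos (hy.trans hyz) β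
    have hX : 0 < c * (Real.log z - Real.log y) := by positivity
    have e : (k2 * z ^ η + (k1 - k2 * y ^ η)) / (c * Real.log z + -(c * Real.log y))
        = (k1 + k2 * (z ^ η - y ^ η)) / (c * (Real.log z - Real.log y)) := by ring
    have hN : k1 + k2 * (z ^ η - y ^ η)
        ≤ k1 + k2 * (z ^ η - y ^ η) - k4 / ρ * (z ^ β - y ^ β) := by
      linarith [mul_le_mul_of_nonneg_left h2 hk4'.le,
        mul_nonneg hk4'.le (mul_nonneg (mul_nonneg hnb.le hzβ.le) hu'.le)]
    rw [e, div_le_div_iff₀ hX hX]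
    exact mul_le_mul_of_nonneg_right hN hX.le
  have lbE : ∀ y z : ℝ, 0 < y → y < z →
      (k4 / ρ * y ^ β + (k1 - k4 / ρ * z ^ β)) / (c * (-Real.log y) + c * Real.log z) ≤ F y z := by
    intro y z hy hyz
    rw [hF' y z hy hyz]
    have h1 := hηbd hy hyz
    have hu' := hu hy hyz
    have hyη : 0 < y ^ η := Real.rpow_pos_of_pos hy η
    have hX : 0 < c * (Real.log z - Real.log y) := by positivity
    have e : (k4 / ρ * y ^ β + (k1 - k4 / ρ * z ^ β)) / (c * (-Real.log y) + c * Real.log z)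
        = (k1 - k4 / ρ * (z ^ β - y ^ β)) / (c * (Real.log z - Real.log y)) := by ring
    have hN : k1 - k4 / ρ * (z ^ β - y ^ β)
        ≤ k1 + k2 * (z ^ η - y ^ η) - k4 / ρ * (z ^ β - y ^ β) := by
      linarith [mul_le_mul_of_nonneg_left h1 hk2.le,
        mul_nonneg hk2.le (mul_nonneg (mul_nonneg hη0.le hyη.le) hu'.le)]
    rw [e, div_le_div_iff₀ hX hX]
    exact mul_le_mul_of_nonneg_right hN hX.le
  refine ⟨?_, ?_, ?_, ?_, ?_, ?_, ?_⟩
  · -- limit 1 : (y,z) → (xbar, xbar)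
    intro xbar hxbar
    have hDmem : ∀ᶠ p : ℝ × ℝ in nhds (xbar, xbar) ⊓ 𝓟 D, p ∈ D :=
      eventually_inf_principal.2 (Eventually.of_forall fun p hp => hp)
    have hlog : Tendsto (fun p : ℝ × ℝ => c * (Real.log p.2 - Real.log p.1))
        (nhds (xbar, xbar) ⊓ 𝓟 D) (𝓝[>] (0:ℝ)) := by
      rw [tendsto_nhdsWithin_iff]
      constructor
      · have h1 : ContinuousAt (fun p : ℝ × ℝ => c * (Real.log p.2 - Real.log p.1))
            (xbar, xbar) :=
          continuousAt_const.mul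
            (((Real.continuousAt_log (ne_of_gt hxbar)).comp' continuousAt_snd).sub
              ((Real.continuousAt_log (ne_of_gt hxbar)).comp' continuousAt_fst))
        have h2 := h1.tendsto
        simp only [sub_self, mul_zero] at h2
        exact h2.mono_left inf_le_left
      · filter_upwards [hDmem] with p hp
        rw [hD] at hp
        exact mul_pos hc (hu hp.1 hp.2)
    have hmain : Tendsto (fun p : ℝ × ℝ => k1 / (c * (Real.log p.2 - Real.log p.1)))
        (nhds (xbar, xbar) ⊓ 𝓟 D) atTop := by
      have h3 := hlog.inv_tendsto_nhdsGT_zero.const_mul_atTop hk1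
      refine h3.congr fun p => ?_
      simp [Pi.inv_apply, div_eq_mul_inv]
    refine tendsto_atTop_mono' _ ?_ hmain
    filter_upwards [hDmem] with p hp
    rw [hD] at hp
    exact lbA p.1 p.2 hp.1 hp.2
  · -- limit 2 : y fixed, z → ∞
    intro y hy
    have h := gbm_quot_atTop (a := k2) (c' := c) (r := η)
      (k1 - k2 * y ^ η) (-(c * Real.log y)) hk2 hc hη0
    refine tendsto_atTop_mono' _ ?_ h
    filter_upwards [eventually_gt_atTop y] with z hz
    exact lbD y z hy hz
  · -- limit 3 : (y,z) → (∞,∞)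
    have hDmem : ∀ᶠ p : ℝ × ℝ in (atTop ×ˢ atTop) ⊓ 𝓟 D, p ∈ D :=
      eventually_inf_principal.2 (Eventually.of_forall fun p hp => hp)
    have hyT : Tendsto (fun p : ℝ × ℝ => p.1) ((atTop ×ˢ atTop) ⊓ 𝓟 D) atTop :=
      tendsto_fst.mono_left inf_le_left
    have hmain : Tendsto (fun p : ℝ × ℝ => k2 * η / c * p.1 ^ η)
        ((atTop ×ˢ atTop) ⊓ 𝓟 D) atTop :=
      ((tendsto_rpow_atTop hη0).comp hyT).const_mul_atTop (by positivity)
    refine tendsto_atTop_mono' _ ?_ hmain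
    filter_upwards [hDmem] with p hp
    rw [hD] at hp
    exact lbB p.1 p.2 hp.1 hp.2
  · -- limit 4 : z fixed, y → 0+
    intro z hz
    have h := gbm_quot_zero (a := k4 / ρ) (c' := c) (b := β)
      (k1 - k4 / ρ * z ^ β) (c * Real.log z) hk4' hc hβ
    refine tendsto_atTop_mono' _ ?_ h
    filter_upwards [Ioo_mem_nhdsGT_of_mem (Set.left_mem_Ico.2 hz)] with y hy
    exact lbE y z hy.1 hy.2
  · -- limit 5 : (y,z) → (0,∞)
    have hDmem : ∀ᶠ p : ℝ × ℝ in ((nhdsWithin 0 (Ioi 0)) ×ˢ atTop) ⊓ 𝓟 D, p ∈ D :=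
      eventually_inf_principal.2 (Eventually.of_forall fun p hp => hp)
    have hA : Tendsto (fun z : ℝ => (k2 * z ^ η + -k2) / (c * Real.log z + 0)) atTop atTop :=
      gbm_quot_atTop (-k2) 0 hk2 hc hη0
    have hB : Tendsto (fun y : ℝ => (k4 / ρ * y ^ β + (k1 - k4 / ρ)) / (c * (-Real.log y) + 0))
        (𝓝[>] (0:ℝ)) atTop := gbm_quot_zero (k1 - k4 / ρ) 0 hk4' hc hβ
    simp only [add_zero] at hA hB
    have hA' : Tendsto (fun p : ℝ × ℝ => (k2 * p.2 ^ η + -k2) / (c * Real.log p.2))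
        (((nhdsWithin 0 (Ioi 0)) ×ˢ atTop) ⊓ 𝓟 D) atTop :=
      hA.comp (tendsto_snd.mono_left inf_le_left)
    have hB' : Tendsto (fun p : ℝ × ℝ =>
        (k4 / ρ * p.1 ^ β + (k1 - k4 / ρ)) / (c * (-Real.log p.1)))
        (((nhdsWithin 0 (Ioi 0)) ×ˢ atTop) ⊓ 𝓟 D) atTop :=
      hB.comp (tendsto_fst.mono_left inf_le_left)
    have hmemL : Ioo (0:ℝ) 1 ×ˢ Ici (2:ℝ) ∈ ((nhdsWithin 0 (Ioi 0)) ×ˢ atTop) ⊓ 𝓟 D :=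
      mem_inf_of_left (prod_mem_prod (Ioo_mem_nhdsGT_of_mem (Set.left_mem_Ico.2 one_pos))
        (Ici_mem_atTop 2))
    rw [tendsto_atTop]
    intro b
    filter_upwards [hA'.eventually_ge_atTop b, hB'.eventually_ge_atTop b, hDmem,
      hmemL] with p hpA hpB hpD hp
    obtain ⟨⟨hp0, hp1⟩, hp2⟩ := hp
    rw [hD] at hpD
    have hy := hpD.1
    have hyz := hpD.2
    have hz1 : (1:ℝ) < p.2 := lt_of_lt_of_le one_lt_two hp2
    have hs : 0 < c * Real.log p.2 := mul_pos hc (Real.log_pos hz1)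
    have ht : 0 < c * (-Real.log p.1) := mul_pos hc (neg_pos.2 (Real.log_neg hp0 hp1))
    have hmed := gbm_mediant (a := k2 * p.2 ^ η + -k2)
      (b := k4 / ρ * p.1 ^ β + (k1 - k4 / ρ)) hs ht
    have hXeq : c * Real.log p.2 + c * (-Real.log p.1)
        = c * (Real.log p.2 - Real.log p.1) := by ring
    have hyη1 : p.1 ^ η ≤ 1 := Real.rpow_le_one hp0.le hp1.le hη0.le
    have hzβ1 : p.2 ^ β ≤ 1 := Real.rpow_le_one_of_one_le_of_nonpos hz1.le hβ.le
    have hX : 0 < c * (Real.log p.2 - Real.log p.1) := mul_pos hc (hu hy hyz)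
    have hnum : (k2 * p.2 ^ η + -k2) + (k4 / ρ * p.1 ^ β + (k1 - k4 / ρ))
        ≤ k1 + k2 * (p.2 ^ η - p.1 ^ η) - k4 / ρ * (p.2 ^ β - p.1 ^ β) := by
      linarith [mul_le_mul_of_nonneg_left hyη1 hk2.le, mul_le_mul_of_nonneg_left hzβ1 hk4'.le]
    calc b ≤ min ((k2 * p.2 ^ η + -k2) / (c * Real.log p.2))
          ((k4 / ρ * p.1 ^ β + (k1 - k4 / ρ)) / (c * (-Real.log p.1))) := le_min hpA hpB
      _ ≤ ((k2 * p.2 ^ η + -k2) + (k4 / ρ * p.1 ^ β + (k1 - k4 / ρ))) /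
          (c * Real.log p.2 + c * (-Real.log p.1)) := hmed
      _ ≤ (k1 + k2 * (p.2 ^ η - p.1 ^ η) - k4 / ρ * (p.2 ^ β - p.1 ^ β)) /
          (c * (Real.log p.2 - Real.log p.1)) := by
          rw [hXeq, div_le_div_iff₀ hX hX]
          exact mul_le_mul_of_nonneg_right hnum hX.le
      _ = F p.1 p.2 := (hF' p.1 p.2 hy hyz).symm
  · -- limit 6 : (y,z) → (0,0)
    have hDmem : ∀ᶠ p : ℝ × ℝ in nhds ((0:ℝ), (0:ℝ)) ⊓ 𝓟 D, p ∈ D :=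
      eventually_inf_principal.2 (Eventually.of_forall fun p hp => hp)
    have hz0 : Tendsto (fun p : ℝ × ℝ => p.2) (nhds ((0:ℝ), (0:ℝ)) ⊓ 𝓟 D) (𝓝[>] (0:ℝ)) := by
      rw [tendsto_nhdsWithin_iff]
      refine ⟨continuousAt_snd.tendsto.mono_left inf_le_left, ?_⟩
      filter_upwards [hDmem] with p hp
      rw [hD] at hp
      exact hp.1.trans hp.2
    have hmain := ((gbm_rpow_neg_zero hβ).comp hz0).const_mul_atTop
      (show 0 < k4 / ρ * (-β) / c from div_pos (mul_pos hk4' hnb) hc)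
    refine tendsto_atTop_mono' _ ?_ hmain
    filter_upwards [hDmem] with p hp
    rw [hD] at hp
    exact lbC p.1 p.2 hp.1 hp.2
  · -- minimum attained
    have hFcont : ContinuousOn (fun p : ℝ × ℝ => F p.1 p.2) D := by
      have hGcont : ContinuousOn (fun p : ℝ × ℝ =>
          (k1 + k2 * (p.2 ^ η - p.1 ^ η) - k4 / ρ * (p.2 ^ β - p.1 ^ β)) /
            (c * (Real.log p.2 - Real.log p.1))) D := by
        intro p hp
        rw [hD] at hp
        obtain ⟨hp1, hp2⟩ := hp
        have hz : 0 < p.2 := hp1.trans hp2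
        apply ContinuousAt.continuousWithinAt
        have cyη : ContinuousAt (fun p : ℝ × ℝ => p.1 ^ η) p :=
          (Real.continuousAt_rpow_const _ _ (Or.inl (ne_of_gt hp1))).comp continuousAt_fst
        have czη : ContinuousAt (fun p : ℝ × ℝ => p.2 ^ η) p :=
          (Real.continuousAt_rpow_const _ _ (Or.inl (ne_of_gt hz))).comp continuousAt_snd
        have cyβ : ContinuousAt (fun p : ℝ × ℝ => p.1 ^ β) p :=
          (Real.continuousAt_rpow_const _ _ (Or.inl (ne_of_gt hp1))).comp continuousAt_fst
        have czβ : ContinuousAt (fun p : ℝ × ℝ => p.2 ^ β) p :=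
          (Real.continuousAt_rpow_const _ _ (Or.inl (ne_of_gt hz))).comp continuousAt_snd
        have cly : ContinuousAt (fun p : ℝ × ℝ => Real.log p.1) p :=
          (Real.continuousAt_log (ne_of_gt hp1)).comp continuousAt_fst
        have clz : ContinuousAt (fun p : ℝ × ℝ => Real.log p.2) p :=
          (Real.continuousAt_log (ne_of_gt hz)).comp continuousAt_snd
        exact ((continuousAt_const.add (continuousAt_const.mul (czη.sub cyη))).sub
            (continuousAt_const.mul (czβ.sub cyβ))).div
          (continuousAt_const.mul (clz.sub cly)) (ne_of_gt (mul_pos hc (hu hp1 hp2)))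
      exact hGcont.congr fun p hp => by
        rw [hD] at hp; exact hF' p.1 p.2 hp.1 hp.2
    obtain ⟨M, hM_def⟩ : ∃ x : ℝ, x = max (F 1 2) 1 := ⟨_, rfl⟩
    have hM1 : (1:ℝ) ≤ M := hM_def ▸ le_max_right _ _
    have hMpos : 0 < M := lt_of_lt_of_le one_pos hM1
    have hF12M : F 1 2 ≤ M := hM_def ▸ le_max_left _ _
    obtain ⟨Y, hY_def⟩ : ∃ x : ℝ, x = (M * c / (k2 * η)) ^ (1/η) := ⟨_, rfl⟩
    have hYpos : 0 < Y := hY_def ▸ Real.rpow_pos_of_pos (by positivity) _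
    have hYbd : ∀ y z : ℝ, 0 < y → y < z → F y z ≤ M → y ≤ Y := by
      intro y z hy hyz hFM
      have h := (lbB y z hy hyz).trans hFM
      have hyη : y ^ η ≤ M * c / (k2 * η) := by
        rw [le_div_iff₀ (by positivity)]
        have h2 := mul_le_mul_of_nonneg_right h hc.le
        have e : k2 * η / c * y ^ η * c = y ^ η * (k2 * η) := by field_simp
        rw [e] at h2
        exact h2
      have e2 : (y ^ η) ^ (1/η) = y := by
        rw [← Real.rpow_mul hy.le, mul_one_div, div_self (ne_of_gt hη0), Real.rpow_one]
      calc y = (y ^ η) ^ (1/η) := e2.symm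
        _ ≤ (M * c / (k2 * η)) ^ (1/η) :=
            Real.rpow_le_rpow (Real.rpow_pos_of_pos hy η).le hyη (by positivity)
        _ = Y := hY_def.symm
    obtain ⟨Z0, hZ0_def⟩ : ∃ x : ℝ, x = (M * c / (k4 / ρ * (-β))) ^ (1/β) := ⟨_, rfl⟩
    have hZ0pos : 0 < Z0 :=
      hZ0_def ▸ Real.rpow_pos_of_pos (div_pos (mul_pos hMpos hc) (mul_pos hk4' hnb)) _
    have hZbd : ∀ y z : ℝ, 0 < y → y < z → F y z ≤ M → Z0 ≤ z := by
      intro y z hy hyz hFM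
      have hz : 0 < z := hy.trans hyz
      have h := (lbC y z hy hyz).trans hFM
      have hzβ : z ^ β ≤ M * c / (k4 / ρ * (-β)) := by
        rw [le_div_iff₀ (mul_pos hk4' hnb)]
        have h2 := mul_le_mul_of_nonneg_right h hc.le
        have e : k4 / ρ * (-β) / c * z ^ β * c = z ^ β * (k4 / ρ * (-β)) := by field_simp
        rw [e] at h2
        exact h2
      have e2 : (z ^ β) ^ (1/β) = z := by
        rw [← Real.rpow_mul hz.le, mul_one_div, div_self (ne_of_lt hβ), Real.rpow_one]
      calc Z0 = (M * c / (k4 / ρ * (-β))) ^ (1/β) := hZ0_def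
        _ ≤ (z ^ β) ^ (1/β) :=
            Real.rpow_le_rpow_of_nonpos (Real.rpow_pos_of_pos hz β) hzβ (one_div_neg.2 hβ).le
        _ = z := e2
    obtain ⟨δ, hδ_def⟩ : ∃ x : ℝ, x = k1 / (M * c) := ⟨_, rfl⟩
    have hδpos : 0 < δ := hδ_def ▸ div_pos hk1 (mul_pos hMpos hc)
    have hδbd : ∀ y z : ℝ, 0 < y → y < z → F y z ≤ M → δ ≤ Real.log z - Real.log y := by
      intro y z hy hyz hFM
      have h := (lbA y z hy hyz).trans hFM
      have hX : 0 < c * (Real.log z - Real.log y) := mul_pos hc (hu hy hyz)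
      rw [div_le_iff₀ hX] at h
      rw [hδ_def, div_le_iff₀ (mul_pos hMpos hc)]
      nlinarith [h]
    obtain ⟨ψ, hψ_def⟩ : ∃ f : ℝ → ℝ,
        f = fun x => M * c * Real.log x - k2 * x ^ η + k4 / ρ * x ^ β := ⟨_, rfl⟩
    have hψcont : ContinuousOn ψ (Ioi 0) := by
      intro x hx
      have hx0 : (0:ℝ) < x := hx
      apply ContinuousAt.continuousWithinAt
      rw [hψ_def]
      exact ((continuousAt_const.mul (Real.continuousAt_log (ne_of_gt hx0))).sub
          (continuousAt_const.mul (Real.continuousAt_rpow_const _ _ (Or.inl (ne_of_gt hx0))))).add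
        (continuousAt_const.mul (Real.continuousAt_rpow_const _ _ (Or.inl (ne_of_gt hx0))))
    have hψ_bot : Tendsto ψ atTop atBot := by
      rw [hψ_def]; exact gbm_psi_atBot (mul_pos hMpos hc) hk2 hk4' hη0 hβ
    have hψ_top : Tendsto ψ (𝓝[>] (0:ℝ)) atTop := by
      rw [hψ_def]; exact gbm_psi_atTop (mul_pos hMpos hc) hk2 hk4' hη0 hβ
    have hψineq : ∀ y z : ℝ, 0 < y → y < z → F y z ≤ M → k1 ≤ ψ z - ψ y := by
      intro y z hy hyz hFM
      have hX : 0 < c * (Real.log z - Real.log y) := mul_pos hc (hu hy hyz)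
      rw [hF' y z hy hyz, div_le_iff₀ hX] at hFM
      have e1 : ψ z = M * c * Real.log z - k2 * z ^ η + k4 / ρ * z ^ β := by rw [hψ_def]
      have e2 : ψ y = M * c * Real.log y - k2 * y ^ η + k4 / ρ * y ^ β := by rw [hψ_def]
      rw [e1, e2]
      nlinarith [hFM]
    obtain ⟨R1, hR1⟩ := eventually_atTop.1 (hψ_bot.eventually (eventually_le_atBot (0:ℝ)))
    obtain ⟨x0, hx0mem, hx0max⟩ := (isCompact_Icc (a := Z0) (b := max R1 Z0)).exists_isMaxOn
      (nonempty_Icc.2 (le_max_right _ _))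
      (hψcont.mono fun x hx => lt_of_lt_of_le hZ0pos hx.1)
    obtain ⟨Cup, hCup⟩ : ∃ Cup, ∀ x, Z0 ≤ x → ψ x ≤ Cup := by
      refine ⟨max (ψ x0) 0, fun x hx => ?_⟩
      rcases le_total x (max R1 Z0) with hle | hge
      · exact le_trans (hx0max ⟨hx, hle⟩) (le_max_left _ _)
      · exact le_trans (hR1 x (le_trans (le_max_left _ _) hge)) (le_max_right _ _)
    obtain ⟨ε, hεpos, hεbd⟩ : ∃ ε > 0, ∀ x, 0 < x → x < ε → (0:ℝ) ≤ ψ x := by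
      have h := hψ_top.eventually (eventually_ge_atTop (0:ℝ))
      rw [(nhdsGT_basis (0:ℝ)).eventually_iff] at h
      obtain ⟨ε, hε, h⟩ := h
      exact ⟨ε, hε, fun x hx1 hx2 => h ⟨hx1, hx2⟩⟩
    obtain ⟨a1, ha1_def⟩ : ∃ x : ℝ, x = min (ε/2) Y := ⟨_, rfl⟩
    have ha1pos : 0 < a1 := ha1_def ▸ lt_min (half_pos hεpos) hYpos
    have ha1Y : a1 ≤ Y := ha1_def ▸ min_le_right _ _
    obtain ⟨x1, hx1mem, hx1min⟩ := (isCompact_Icc (a := a1) (b := Y)).exists_isMinOn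
      (nonempty_Icc.2 ha1Y) (hψcont.mono fun x hx => lt_of_lt_of_le ha1pos hx.1)
    obtain ⟨Clow, hClow⟩ : ∃ Clow, ∀ x, 0 < x → x ≤ Y → Clow ≤ ψ x := by
      refine ⟨min (ψ x1) 0, fun x hx hxY => ?_⟩
      rcases le_total a1 x with hge | hle
      · exact le_trans (min_le_left _ _) (hx1min ⟨hge, hxY⟩)
      · refine le_trans (min_le_right _ _) (hεbd x hx ?_)
        calc x ≤ a1 := hle
          _ ≤ ε/2 := ha1_def ▸ min_le_left _ _
          _ < ε := half_lt_self hεpos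
    obtain ⟨b0, hb0⟩ := eventually_atTop.1
      (hψ_bot.eventually (eventually_le_atBot (Clow + k1 - 1)))
    obtain ⟨a0, ha0pos, ha0⟩ : ∃ a0 > 0, ∀ x, 0 < x → x < a0 → Cup - k1 + 1 ≤ ψ x := by
      have h := hψ_top.eventually (eventually_ge_atTop (Cup - k1 + 1))
      rw [(nhdsGT_basis (0:ℝ)).eventually_iff] at h
      obtain ⟨a0, ha0, h⟩ := h
      exact ⟨a0, ha0, fun x hx1 hx2 => h ⟨hx1, hx2⟩⟩
    obtain ⟨K, hK_def⟩ : ∃ s : Set (ℝ × ℝ),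
        s = (Icc a0 Y ×ˢ Icc Z0 b0) ∩ {p : ℝ × ℝ | p.1 * Real.exp δ ≤ p.2} := ⟨_, rfl⟩
    have hKcomp : IsCompact K := by
      rw [hK_def]
      exact (isCompact_Icc.prod isCompact_Icc).inter_right
        (isClosed_le (continuous_fst.mul continuous_const) continuous_snd)
    have hKD : K ⊆ D := by
      intro p hp
      rw [hK_def] at hp
      rw [hD]
      obtain ⟨⟨hpa, hpb⟩, hpe⟩ := hp
      have hp1 : 0 < p.1 := lt_of_lt_of_le ha0pos hpa.1
      refine ⟨hp1, lt_of_lt_of_le ?_ hpe⟩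
      exact (lt_mul_iff_one_lt_right hp1).2 (Real.one_lt_exp_iff.2 hδpos)
    have hmemK : ∀ y z : ℝ, 0 < y → y < z → F y z ≤ M → (y, z) ∈ K := by
      intro y z hy hyz hFM
      have hz : 0 < z := hy.trans hyz
      have hyY := hYbd y z hy hyz hFM
      have hzZ := hZbd y z hy hyz hFM
      have hδu := hδbd y z hy hyz hFM
      have hk := hψineq y z hy hyz hFM
      have hψyC : Clow ≤ ψ y := hClow y hy hyY
      have hψzC : ψ z ≤ Cup := hCup z hzZ
      have hzb : z ≤ b0 := by
        by_contra hcon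
        push_neg at hcon
        have := hb0 z (le_of_lt hcon)
        linarith
      have hya : a0 ≤ y := by
        by_contra hcon
        push_neg at hcon
        have := ha0 y hy hcon
        linarith
      have hexp : y * Real.exp δ ≤ z := by
        have h1 : Real.exp δ ≤ Real.exp (Real.log z - Real.log y) := Real.exp_le_exp.2 hδu
        have h2 : y * Real.exp (Real.log z - Real.log y) = z := by
          rw [Real.exp_sub, Real.exp_log hz, Real.exp_log hy, mul_comm,
            div_mul_cancel₀ z (ne_of_gt hy)]
        calc y * Real.exp δ ≤ y * Real.exp (Real.log z - Real.log y) :=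
              mul_le_mul_of_nonneg_left h1 hy.le
          _ = z := h2
      rw [hK_def]
      exact ⟨⟨⟨hya, hyY⟩, ⟨hzZ, hzb⟩⟩, hexp⟩
    have h12K : ((1:ℝ), (2:ℝ)) ∈ K := hmemK 1 2 one_pos one_lt_two hF12M
    obtain ⟨pstar, hpK, hpmin⟩ := hKcomp.exists_isMinOn ⟨_, h12K⟩ (hFcont.mono hKD)
    have hpD := hKD hpK
    rw [hD] at hpD
    refine ⟨pstar.1, pstar.2, hpD.1, hpD.2, ?_⟩
    intro y z hy hyz
    rcases le_or_gt (F y z) M with hle | hgt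
    · exact hpmin (hmemK y z hy hyz hle)
    · calc F pstar.1 pstar.2 ≤ F 1 2 := hpmin h12K
        _ ≤ M := hF12M
        _ ≤ F y z := hgt.le
end
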